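/- Assume the corrector setting: ω ∈ Ω, a = a^ω the diagonal conductance field, a_h ∈ ℝ^{d×d}, and functions φ_i, σ_{ijk}, q_{ij} : ℤ^d → ℝ satisfying, for all i,j,k ∈ {1,…,d} and all points of ℤ^d: q_i = a(∇φ_i + e_i) − a_h e_i, −∇^*·q_i = 0, −∇^*·σ_i = q_i, and σ_{ijk} = −σ_{ikj}. Let x ∈ ℤ^d and let u, v, w, η : ℤ^d → ℝ satisfy w = u − v − η φ_i ∇_i v on ℤ^d (summation over i) and (∇^*·a∇u)(x) = (∇^*·a_h∇v)(x) = 0. Then (∇^*·a∇w)(x) = −(∇^*·((1−η)(a−a_h)∇v))(x) − (∇^*·[(σ_i·∇^*)(η∇_i v)])(x) − (∇^*·a[(φ_i∇)(η∇_i v)])(x), with summation over i in the last two terms. -/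

import Mathlib

open MeasureTheory Filter
open scoped ENNReal Classical

noncomputable section

/-- Points of the lattice `ℤ^d`. -/
abbrev Zd (d : ℕ) := Fin d → ℤ

/-- The `i`-th standard unit vector of `ℤ^d`. -/
def unitVec {d : ℕ} (i : Fin d) : Zd d := fun j => if j = i then 1 else 0

/-- Environments: a positive conductance for every (unoriented nearest-neighbour) edge,
where the edge `{x, x + e i}` is encoded by the pair `(x, i)`. -/
abbrev Env (d : ℕ) := ((Fin d → ℤ) × Fin d) → {r : ℝ // 0 < r}

/-- The conductance of the edge `{x, x + e i}` in the environment `ω`, as a real number. -/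
def cval {d : ℕ} (ω : Env d) (x : Zd d) (i : Fin d) : ℝ := (ω (x, i)).1

/-- Nearest-neighbour adjacency on `ℤ^d`. -/
def Adj {d : ℕ} (x y : Zd d) : Prop :=
  ∃ i : Fin d, y = x + unitVec i ∨ x = y + unitVec i

/-- The conductance `ω_{xy}` between two nearest neighbours `x ∼ y` (and `0` otherwise). -/
def econd {d : ℕ} (ω : Env d) (x y : Zd d) : ℝ :=
  ∑ i : Fin d, ((if y = x + unitVec i then cval ω x i else 0)
    + (if x = y + unitVec i then cval ω y i else 0))

/-- Discrete gradient `(∇_i u)(x) = u(x+e_i) - u(x)`. -/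
def dGrad {d : ℕ} (i : Fin d) (f : Zd d → ℝ) (x : Zd d) : ℝ :=
  f (x + unitVec i) - f x

/-- Discrete backward gradient `(∇_i^* u)(x) = u(x-e_i) - u(x)`. -/
def dGradStar {d : ℕ} (i : Fin d) (f : Zd d → ℝ) (x : Zd d) : ℝ :=
  f (x - unitVec i) - f x

/-- Discrete divergence `(∇^* ⬝ F)(x) = ∑ i, (F_i(x-e_i) - F_i(x))`. -/
def divStar {d : ℕ} (F : Zd d → Fin d → ℝ) (x : Zd d) : ℝ :=
  ∑ i : Fin d, (F (x - unitVec i) i - F x i)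

/-- Discrete Laplacian `Δu = -∑ i, ∇_i^* ∇_i u`. -/
def lap {d : ℕ} (f : Zd d → ℝ) (x : Zd d) : ℝ :=
  - ∑ i : Fin d, dGradStar i (dGrad i f) x

/-- The open discrete box `D_R = {x : |x|_∞ < R}`. -/
def boxD (d R : ℕ) : Finset (Zd d) :=
  Fintype.piFinset fun _ => Finset.Ioo (-(R : ℤ)) (R : ℤ)

/-- The closed discrete box `D̄_R = {x : |x|_∞ ≤ R}`. -/
def boxC (d R : ℕ) : Finset (Zd d) :=
  Fintype.piFinset fun _ => Finset.Icc (-(R : ℤ)) (R : ℤ)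

/-- The discrete boundary `∂D_R = {x : |x|_∞ = R}`. -/
def bdry (d R : ℕ) : Finset (Zd d) := boxC d R \ boxD d R

/-- The reduced boundary `∂̃D_R` of points of `∂D_R` having a neighbour in `D_R`. -/
def tbdry (d R : ℕ) : Finset (Zd d) :=
  (bdry d R).filter fun x => ∃ y ∈ boxD d R, Adj x y

/-- The oriented edge set `E_R = {(x,y) : x ∼ y, |x+y|_∞ < 2R}`. -/
def ER (d R : ℕ) : Finset (Zd d × Zd d) :=
  ((boxC d R) ×ˢ (boxC d R)).filter fun e =>
    Adj e.1 e.2 ∧ ∀ i, |e.1 i + e.2 i| < 2 * (R : ℤ)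

/-- The normal edges `E_R^{nor} = {(x,y) : x ∈ D_R, y ∈ ∂D_R, x ∼ y}`. -/
def Enor (d R : ℕ) : Finset (Zd d × Zd d) :=
  ((boxD d R) ×ˢ (bdry d R)).filter fun e => Adj e.1 e.2

/-- The tangential edges `E_R^{tan} = {(x,y) : x, y ∈ ∂D_R, x ∼ y}`. -/
def Etan (d R : ℕ) : Finset (Zd d × Zd d) :=
  ((bdry d R) ×ˢ (bdry d R)).filter fun e => Adj e.1 e.2

/-- Normalized `ℓ^r` norm `⦀u⦀_{r,A}` on a finite set. -/
def avNorm {V : Type*} (r : ℝ) (A : Finset V) (u : V → ℝ) : ℝ :=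
  ((∑ x ∈ A, |u x| ^ r) / (A.card : ℝ)) ^ (1 / r)

/-- Sup norm `⦀u⦀_{∞,A}` on a finite set. -/
def supNorm {V : Type*} (A : Finset V) (u : V → ℝ) : ℝ :=
  ⨆ x ∈ A, |u x|

/-- Normalized `ℓ^r` norm for an extended exponent `r ∈ [1,∞]`. -/
def avNormE {V : Type*} (r : ℝ≥0∞) (A : Finset V) (u : V → ℝ) : ℝ :=
  if r = ∞ then supNorm A u else avNorm r.toReal A u

/-- The exponent `2p/(p-1)`, with the convention that it equals `2` for `p = ∞`. -/
def dualExp (p : ℝ≥0∞) : ℝ :=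
  if p = ∞ then 2 else 2 * p.toReal / (p.toReal - 1)

/-- The exponent `2p/(p+1)`, with the convention that it equals `2` for `p = ∞`. -/
def coExp (p : ℝ≥0∞) : ℝ :=
  if p = ∞ then 2 else 2 * p.toReal / (p.toReal + 1)

/-- Euclidean norm on `ℝ^d`. -/
def vecNorm {d : ℕ} (v : Fin d → ℝ) : ℝ := Real.sqrt (∑ i, v i ^ 2)

/-- The translation `τ_a` acting on environments. -/
def shiftEnv {d : ℕ} (a : Zd d) (ω : Env d) : Env d := fun e => ω (e.1 + a, e.2)

/-- Stationarity of a measure on environments. -/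
def Stationary {d : ℕ} (P : Measure (Env d)) : Prop :=
  ∀ a : Zd d, MeasurePreserving (shiftEnv a) P P

/-- Ergodicity of a measure on environments w.r.t. the translations. -/
def ErgodicEnv {d : ℕ} (P : Measure (Env d)) : Prop :=
  ∀ A : Set (Env d), MeasurableSet A → (∀ a : Zd d, shiftEnv a ⁻¹' A = A) →
    P A = 0 ∨ P A = 1

/-- Stationary (`Stat_P`) random fields. -/
def StatP {d : ℕ} {E : Type*} [MeasurableSpace E] (P : Measure (Env d))
    (f : Env d → Zd d → E) : Prop :=
  Measurable (Function.uncurry f) ∧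
    ∀ᵐ ω ∂P, ∀ x : Zd d, f ω x = f (shiftEnv x ω) 0

/-- The horizontal derivative `D_i` on functions of the environment. -/
def Dop {d : ℕ} (i : Fin d) (ζ : Env d → ℝ) : Env d → ℝ :=
  fun ω => ζ (shiftEnv (unitVec i) ω) - ζ ω

/-- The horizontal derivative `D_i^*` on functions of the environment. -/
def DopStar {d : ℕ} (i : Fin d) (ζ : Env d → ℝ) : Env d → ℝ :=
  fun ω => ζ (shiftEnv (-(unitVec i)) ω) - ζ ω

/-- The reflection of `ℤ^d` flipping the `j`-th coordinate. -/
def reflPt {d : ℕ} (j : Fin d) (x : Zd d) : Zd d := fun k => if k = j then -x k else x k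

/-- The reflection `ρ_j` acting on environments. -/
def reflEnv {d : ℕ} (j : Fin d) (ω : Env d) : Env d :=
  fun e => ω (if e.2 = j then reflPt j e.1 - unitVec j else reflPt j e.1, e.2)

private lemma sum_antisym_aux {d : ℕ} (F : Fin d → Fin d → ℝ)
    (h : ∀ j k, F j k = - F k j) : (∑ j : Fin d, ∑ k : Fin d, F j k) = 0 := by
  have h1 : (∑ j : Fin d, ∑ k : Fin d, F j k)
      = ∑ j : Fin d, ∑ k : Fin d, - F j k := by
    rw [Finset.sum_comm]
    exact Finset.sum_congr rfl fun a _ => Finset.sum_congr rfl fun b _ => h b a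
  simp only [Finset.sum_neg_distrib] at h1
  linarith

/-- equation for the homogenization error, Lemma `a73`:
given correctors `φ, σ, q` for the environment `ω` and homogenized matrix `ah`, if
`w = u - v - η φ_i ∇_i v` on `ℤ^d` (summation over `i`) and `u` is `a`-harmonic and `v` is
`a_h`-harmonic at the point `x`, then
`(∇^*·a∇w)(x) = -(∇^*·((1-η)(a-a_h)∇v))(x) - (∇^*·[(σ_i·∇^*)(η∇_i v)])(x)
  - (∇^*·a[(φ_i∇)(η∇_i v)])(x)`. -/
theorem homogenization_error_equation
    (d : ℕ) (hd : 2 ≤ d) (ω : Env d) (ah : Matrix (Fin d) (Fin d) ℝ)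
    (φ : Fin d → Zd d → ℝ) (σ : Fin d → Fin d → Fin d → Zd d → ℝ)
    (qf : Fin d → Fin d → Zd d → ℝ)
    (hq : ∀ (i j : Fin d) (x : Zd d),
      qf i j x = cval ω x j * (dGrad j (φ i) x + (if j = i then 1 else 0)) - ah j i)
    (hdivq : ∀ (i : Fin d) (x : Zd d),
      -(∑ j : Fin d, (qf i j (x - unitVec j) - qf i j x)) = 0)
    (hdivσ : ∀ (i j : Fin d) (x : Zd d),
      -(∑ k : Fin d, (σ i j k (x - unitVec k) - σ i j k x)) = qf i j x)
    (hskew : ∀ (i j k : Fin d) (x : Zd d), σ i j k x = - σ i k j x)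
    (x : Zd d) (u v w η : Zd d → ℝ)
    (hw : ∀ y : Zd d, w y = u y - v y - ∑ i : Fin d, η y * φ i y * dGrad i v y)
    (hu : divStar (fun y j => cval ω y j * dGrad j u y) x = 0)
    (hv : divStar (fun y j => ∑ k : Fin d, ah j k * dGrad k v y) x = 0) :
    divStar (fun y j => cval ω y j * dGrad j w y) x
      = - divStar (fun y j =>
            (1 - η y) * (cval ω y j * dGrad j v y - ∑ k : Fin d, ah j k * dGrad k v y)) x
        - divStar (fun y j => ∑ i : Fin d, ∑ k : Fin d,
            σ i j k (y - unitVec k) * dGradStar k (fun z => η z * dGrad i v z) y) x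
        - divStar (fun y j => cval ω y j * ∑ i : Fin d,
            φ i (y + unitVec j) * dGrad j (fun z => η z * dGrad i v z) y) x := by
  classical
  -- Pointwise expansion of `a ∇ w`.
  have hpt : ∀ (y : Zd d) (j : Fin d),
      cval ω y j * dGrad j w y
        = cval ω y j * dGrad j u y
          - (1 - η y) * (cval ω y j * dGrad j v y - ∑ k : Fin d, ah j k * dGrad k v y)
          - (∑ k : Fin d, ah j k * dGrad k v y)
          - cval ω y j * ∑ i : Fin d,
              φ i (y + unitVec j) * dGrad j (fun z => η z * dGrad i v z) y
          - ∑ i : Fin d, η y * dGrad i v y * qf i j y := by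
    intro y j
    have hterm : ∀ i : Fin d,
        η y * dGrad i v y * qf i j y
          + cval ω y j * (φ i (y + unitVec j) * dGrad j (fun z => η z * dGrad i v z) y)
          - cval ω y j * (η (y + unitVec j) * φ i (y + unitVec j) * dGrad i v (y + unitVec j)
              - η y * φ i y * dGrad i v y)
          - (if j = i then 1 else 0) * (η y * (cval ω y j * dGrad j v y))
        = - (η y * (ah j i * dGrad i v y)) := by
      intro i
      rw [hq i j y]
      by_cases h : j = i
      · subst h
        simp only [if_pos rfl, dGrad]
        ring
      · simp only [if_neg h, dGrad]
        ring
    have hsum := Finset.sum_congr rfl fun i (_ : i ∈ (Finset.univ : Finset (Fin d))) => hterm i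
    simp only [Finset.sum_add_distrib, Finset.sum_sub_distrib, ← Finset.mul_sum,
      ite_mul, one_mul, zero_mul, Finset.sum_ite_eq, Finset.mem_univ, if_true,
      Finset.sum_neg_distrib] at hsum
    have hSw : dGrad j w y = dGrad j u y - dGrad j v y
        - ∑ i : Fin d, η (y + unitVec j) * φ i (y + unitVec j) * dGrad i v (y + unitVec j)
        + ∑ i : Fin d, η y * φ i y * dGrad i v y := by
      simp only [dGrad, hw]
      ring
    rw [hSw]
    linear_combination hsum
  -- the corrector identity, per direction `i`
  have key : ∀ i : Fin d,
      (∑ j : Fin d, (η (x - unitVec j) * dGrad i v (x - unitVec j) * qf i j (x - unitVec j)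
          - η x * dGrad i v x * qf i j x))
      = ∑ j : Fin d,
          ((∑ k : Fin d, σ i j k (x - unitVec j - unitVec k)
              * dGradStar k (fun z => η z * dGrad i v z) (x - unitVec j))
            - ∑ k : Fin d, σ i j k (x - unitVec k)
              * dGradStar k (fun z => η z * dGrad i v z) x) := by
    intro i
    set G : Zd d → ℝ := fun z => η z * dGrad i v z with hG
    have hq2 : ∀ (j : Fin d) (y : Zd d),
        qf i j y = ∑ k : Fin d, (σ i j k y - σ i j k (y - unitVec k)) := by
      intro j y
      have h1 : (∑ k : Fin d, (σ i j k y - σ i j k (y - unitVec k)))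
          = -∑ k : Fin d, (σ i j k (y - unitVec k) - σ i j k y) := by
        rw [← Finset.sum_neg_distrib]
        exact Finset.sum_congr rfl fun k _ => by ring
      rw [h1, hdivσ i j y]
    have hq0 : ∑ j : Fin d, (qf i j (x - unitVec j) - qf i j x) = 0 := by
      have := hdivq i x; linarith
    have step1 : ∑ j : Fin d, (G (x - unitVec j) * qf i j (x - unitVec j) - G x * qf i j x)
        = ∑ j : Fin d, (G (x - unitVec j) - G x) * qf i j (x - unitVec j) := by
      have h2 : ∑ j : Fin d, ((G (x - unitVec j) * qf i j (x - unitVec j) - G x * qf i j x)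
            - (G (x - unitVec j) - G x) * qf i j (x - unitVec j))
          = G x * ∑ j : Fin d, (qf i j (x - unitVec j) - qf i j x) := by
        rw [Finset.mul_sum]
        exact Finset.sum_congr rfl fun j _ => by ring
      rw [hq0, mul_zero, Finset.sum_sub_distrib] at h2
      linarith
    have hF : (∑ j : Fin d, ∑ k : Fin d,
        ((G (x - unitVec j) - G x)
            * (σ i j k (x - unitVec j) - σ i j k (x - unitVec j - unitVec k))
          - (σ i j k (x - unitVec j - unitVec k)
              * (G (x - unitVec j - unitVec k) - G (x - unitVec j))
            - σ i j k (x - unitVec k) * (G (x - unitVec k) - G x)))) = 0 := by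
      refine sum_antisym_aux _ fun j k => ?_
      have e1 : x - unitVec k - unitVec j = x - unitVec j - unitVec k :=
        sub_right_comm x _ _
      simp only [hskew i k j, e1]
      ring
    have hdiff : ∑ j : Fin d,
        ((G (x - unitVec j) - G x) * qf i j (x - unitVec j)
          - ((∑ k : Fin d, σ i j k (x - unitVec j - unitVec k)
                * dGradStar k G (x - unitVec j))
            - ∑ k : Fin d, σ i j k (x - unitVec k) * dGradStar k G x))
        = ∑ j : Fin d, ∑ k : Fin d,
        ((G (x - unitVec j) - G x)
            * (σ i j k (x - unitVec j) - σ i j k (x - unitVec j - unitVec k))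
          - (σ i j k (x - unitVec j - unitVec k)
              * (G (x - unitVec j - unitVec k) - G (x - unitVec j))
            - σ i j k (x - unitVec k) * (G (x - unitVec k) - G x))) := by
      refine Finset.sum_congr rfl fun j _ => ?_
      rw [hq2 j (x - unitVec j), Finset.mul_sum]
      simp only [dGradStar]
      rw [← Finset.sum_sub_distrib]
      all_goals rw [← Finset.sum_sub_distrib]
      all_goals exact Finset.sum_congr rfl fun k _ => by ring
    rw [hF, Finset.sum_sub_distrib] at hdiff
    have hGL : (∑ j : Fin d, (η (x - unitVec j) * dGrad i v (x - unitVec j)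
          * qf i j (x - unitVec j) - η x * dGrad i v x * qf i j x))
        = ∑ j : Fin d, (G (x - unitVec j) * qf i j (x - unitVec j) - G x * qf i j x) :=
      Finset.sum_congr rfl fun j _ => by simp only [hG]
    rw [hGL, step1]
    linarith
  -- abbreviate the six vector fields
  set FW : Zd d → Fin d → ℝ := fun y j => cval ω y j * dGrad j w y with hFW
  set F1 : Zd d → Fin d → ℝ := fun y j =>
    (1 - η y) * (cval ω y j * dGrad j v y - ∑ k : Fin d, ah j k * dGrad k v y) with hF1
  set F2 : Zd d → Fin d → ℝ := fun y j => ∑ i : Fin d, ∑ k : Fin d,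
    σ i j k (y - unitVec k) * dGradStar k (fun z => η z * dGrad i v z) y with hF2
  set F3 : Zd d → Fin d → ℝ := fun y j => cval ω y j * ∑ i : Fin d,
    φ i (y + unitVec j) * dGrad j (fun z => η z * dGrad i v z) y with hF3
  set FU : Zd d → Fin d → ℝ := fun y j => cval ω y j * dGrad j u y with hFU
  set FA : Zd d → Fin d → ℝ := fun y j => ∑ k : Fin d, ah j k * dGrad k v y with hFA
  set FQ : Zd d → Fin d → ℝ := fun y j =>
    ∑ i : Fin d, η y * dGrad i v y * qf i j y with hFQ
  simp only [divStar] at hu hv ⊢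
  have hu' : (∑ j : Fin d, (FU (x - unitVec j) j - FU x j)) = 0 := by
    simp only [hFU]; exact hu
  have hv' : (∑ j : Fin d, (FA (x - unitVec j) j - FA x j)) = 0 := by
    simp only [hFA]; exact hv
  have main1 : ∀ j : Fin d, FW (x - unitVec j) j - FW x j
      = (FU (x - unitVec j) j - FU x j) - (F1 (x - unitVec j) j - F1 x j)
        - (FA (x - unitVec j) j - FA x j) - (F3 (x - unitVec j) j - F3 x j)
        - (FQ (x - unitVec j) j - FQ x j) := by
    intro j
    simp only [hFW, hF1, hF3, hFU, hFA, hFQ]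
    rw [hpt (x - unitVec j) j, hpt x j]
    ring
  have hLL : (∑ j : Fin d, (FW (x - unitVec j) j - FW x j))
      = (∑ j : Fin d, (FU (x - unitVec j) j - FU x j))
        - (∑ j : Fin d, (F1 (x - unitVec j) j - F1 x j))
        - (∑ j : Fin d, (FA (x - unitVec j) j - FA x j))
        - (∑ j : Fin d, (F3 (x - unitVec j) j - F3 x j))
        - (∑ j : Fin d, (FQ (x - unitVec j) j - FQ x j)) := by
    rw [← Finset.sum_sub_distrib, ← Finset.sum_sub_distrib, ← Finset.sum_sub_distrib,
      ← Finset.sum_sub_distrib]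
    exact Finset.sum_congr rfl fun j _ => main1 j
  have hQ : (∑ j : Fin d, (FQ (x - unitVec j) j - FQ x j))
      = ∑ j : Fin d, (F2 (x - unitVec j) j - F2 x j) := by
    simp only [hFQ, hF2]
    calc (∑ j : Fin d, ((∑ i : Fin d, η (x - unitVec j) * dGrad i v (x - unitVec j)
            * qf i j (x - unitVec j))
          - ∑ i : Fin d, η x * dGrad i v x * qf i j x))
        = ∑ j : Fin d, ∑ i : Fin d,
            (η (x - unitVec j) * dGrad i v (x - unitVec j) * qf i j (x - unitVec j)
              - η x * dGrad i v x * qf i j x) :=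
          Finset.sum_congr rfl fun j _ => (Finset.sum_sub_distrib _ _).symm
      _ = ∑ i : Fin d, ∑ j : Fin d,
            (η (x - unitVec j) * dGrad i v (x - unitVec j) * qf i j (x - unitVec j)
              - η x * dGrad i v x * qf i j x) := Finset.sum_comm
      _ = ∑ i : Fin d, ∑ j : Fin d,
            ((∑ k : Fin d, σ i j k (x - unitVec j - unitVec k)
                * dGradStar k (fun z => η z * dGrad i v z) (x - unitVec j))
              - ∑ k : Fin d, σ i j k (x - unitVec k)
                * dGradStar k (fun z => η z * dGrad i v z) x) :=
          Finset.sum_congr rfl fun i _ => key i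
      _ = ∑ j : Fin d, ∑ i : Fin d,
            ((∑ k : Fin d, σ i j k (x - unitVec j - unitVec k)
                * dGradStar k (fun z => η z * dGrad i v z) (x - unitVec j))
              - ∑ k : Fin d, σ i j k (x - unitVec k)
                * dGradStar k (fun z => η z * dGrad i v z) x) := Finset.sum_comm
      _ = ∑ j : Fin d, ((∑ i : Fin d, ∑ k : Fin d, σ i j k (x - unitVec j - unitVec k)
              * dGradStar k (fun z => η z * dGrad i v z) (x - unitVec j))
            - ∑ i : Fin d, ∑ k : Fin d, σ i j k (x - unitVec k)
              * dGradStar k (fun z => η z * dGrad i v z) x) :=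
          Finset.sum_congr rfl fun j _ => Finset.sum_sub_distrib _ _
  rw [hLL, hu', hv', hQ]
  ring


end
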